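/- Let N ≥ 1 be an integer and f : [0,∞) → [0,∞) continuous, and define f̂(t) = max{f(v) : 0 ≤ v ≤ t}. If f(x)/x^N tends to a limit L ∈ [0,∞] as x → ∞, then f̂(t)/t^N also tends to L as t → ∞. -/

import Mathlib

open Set Filter
open scoped ENNReal

/-- Lemma 5 (at infinity): let `f : [0,∞) → [0,∞)` be continuous, `N ≥ 1`, and let
`f̂(t) = max{f(v) : 0 ≤ v ≤ t}`. If `f(x)/x^N` tends to `L ∈ [0,∞]` as `x → ∞`
(limits in `[0,∞]` formalized via `ℝ≥0∞`), then `f̂(t)/t^N → L` as `t → ∞`. -/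
theorem running_max_limit_at_infty
    (N : ℕ) (hN : 1 ≤ N) (f : ℝ → ℝ)
    (hfc : ContinuousOn f (Ici 0)) (hfnn : ∀ x, 0 ≤ x → 0 ≤ f x)
    (L : ℝ≥0∞)
    (hL : Tendsto (fun x => ENNReal.ofReal (f x / x ^ N)) atTop (nhds L)) :
    Tendsto (fun t => ENNReal.ofReal (sSup (f '' Icc (0:ℝ) t) / t ^ N))
      atTop (nhds L) := by
  set M : ℝ → ℝ := fun t => sSup (f '' Icc (0:ℝ) t) with hMdef
  have hbdd : ∀ t : ℝ, BddAbove (f '' Icc (0:ℝ) t) := fun t =>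
    (isCompact_Icc.image_of_continuousOn
      (hfc.mono (Icc_subset_Ici_self))).bddAbove
  have hle : ∀ t : ℝ, ∀ x ∈ Icc (0:ℝ) t, f x ≤ M t := fun t x hx =>
    le_csSup (hbdd t) (mem_image_of_mem f hx)
  rcases eq_or_ne L ⊤ with hLtop | hLne
  · subst hLtop
    have hg : Tendsto (fun x => f x / x ^ N) atTop atTop := by
      rw [tendsto_atTop]
      intro C
      have h1 : ∀ᶠ x in atTop,
          ENNReal.ofReal (max C 0) < ENNReal.ofReal (f x / x ^ N) :=
        hL.eventually (eventually_gt_nhds (by simp [ENNReal.ofReal_lt_top]))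
      filter_upwards [h1] with x hx
      exact le_trans (le_max_left C 0)
        ((ENNReal.ofReal_lt_ofReal_iff_of_nonneg (le_max_right C 0)).mp hx).le
    have hg' : Tendsto (fun t => M t / t ^ N) atTop atTop := by
      apply tendsto_atTop_mono' _ _ hg
      filter_upwards [eventually_ge_atTop (1:ℝ)] with t ht
      have ht0 : (0:ℝ) < t := lt_of_lt_of_le zero_lt_one ht
      have hft : f t ≤ M t := hle t t ⟨ht0.le, le_rfl⟩
      gcongr
    exact ENNReal.tendsto_ofReal_atTop.comp hg'
  · set c := L.toReal with hcdef
    have hc0 : 0 ≤ c := ENNReal.toReal_nonneg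
    have hgc : Tendsto (fun x => f x / x ^ N) atTop (nhds c) := by
      have h1 := (ENNReal.tendsto_toReal hLne).comp hL
      apply h1.congr'
      filter_upwards [eventually_ge_atTop (0:ℝ)] with x hx
      simp [Function.comp,
        ENNReal.toReal_ofReal (div_nonneg (hfnn x hx) (pow_nonneg hx N))]
    have hmain : Tendsto (fun t => M t / t ^ N) atTop (nhds c) := by
      rw [Metric.tendsto_atTop]
      intro ε hε
      obtain ⟨A, hA⟩ := (Metric.tendsto_atTop.mp hgc) (ε/2) (half_pos hε)
      set A' : ℝ := max A 1 with hA'def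
      have hA'1 : (1:ℝ) ≤ A' := le_max_right _ _
      have hA'0 : (0:ℝ) < A' := lt_of_lt_of_le zero_lt_one hA'1
      have hMA'0 : 0 ≤ M A' := le_trans (hfnn 0 le_rfl) (hle A' 0 ⟨le_rfl, hA'0.le⟩)
      refine ⟨max A' (2 * M A' / ε), fun t ht => ?_⟩
      have htA' : A' ≤ t := le_trans (le_max_left _ _) ht
      have ht1 : (1:ℝ) ≤ t := hA'1.trans htA'
      have ht0 : (0:ℝ) < t := lt_of_lt_of_le zero_lt_one ht1
      have htN : (0:ℝ) < t ^ N := pow_pos ht0 N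
      -- upper bound
      have hupper : M t / t ^ N ≤ c + ε / 2 := by
        have hMub : M t ≤ max (M A') ((c + ε / 2) * t ^ N) := by
          apply csSup_le (Nonempty.image f (nonempty_Icc.mpr ht0.le))
          rintro y ⟨x, ⟨hx0, hxt⟩, rfl⟩
          rcases le_or_gt x A' with hxa | hxa
          · exact le_trans (hle A' x ⟨hx0, hxa⟩) (le_max_left _ _)
          · have hxA : A ≤ x := le_trans (le_max_left A 1) hxa.le
            have hx1 : (1:ℝ) ≤ x := hA'1.trans hxa.le
            have hx0' : (0:ℝ) < x := lt_of_lt_of_le zero_lt_one hx1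
            have hxN : (0:ℝ) < x ^ N := pow_pos hx0' N
            have hd := hA x hxA
            rw [Real.dist_eq, abs_sub_lt_iff] at hd
            have h2 : f x / x ^ N < c + ε / 2 := by linarith [hd.1]
            have h3 : f x < (c + ε / 2) * x ^ N := by
              rw [div_lt_iff₀ hxN] at h2; exact h2
            refine le_trans h3.le (le_trans ?_ (le_max_right _ _))
            have : x ^ N ≤ t ^ N := pow_le_pow_left₀ hx0'.le hxt N
            nlinarith
        have h4 : M t / t ^ N ≤ max (M A' / t ^ N) (c + ε / 2) := by
          rcases le_max_iff.mp hMub with h | h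
          · exact le_trans (by gcongr) (le_max_left _ _)
          · refine le_trans ?_ (le_max_right _ _)
            rw [div_le_iff₀ htN]; nlinarith
        have h5 : M A' / t ^ N ≤ ε / 2 := by
          have htt : t ≤ t ^ N := le_self_pow₀ ht1 (by omega)
          have h6 : M A' / t ^ N ≤ M A' / t :=
            div_le_div_of_nonneg_left hMA'0 ht0 htt
          have h7 : 2 * M A' / ε ≤ t := le_trans (le_max_right _ _) ht
          have h8 : M A' / t ≤ ε / 2 := by
            rw [div_le_div_iff₀ ht0 (by norm_num : (0:ℝ) < 2)]
            rw [div_le_iff₀ hε] at h7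
            nlinarith
          linarith
        rcases le_max_iff.mp h4 with h | h
        · linarith
        · exact h
      -- lower bound
      have hlower : c - ε / 2 < M t / t ^ N := by
        have hd := hA t (le_trans (le_max_left A 1) htA')
        rw [Real.dist_eq, abs_sub_lt_iff] at hd
        have h2 : c - ε / 2 < f t / t ^ N := by linarith [hd.2]
        have hft : f t ≤ M t := hle t t ⟨ht0.le, le_rfl⟩
        have : f t / t ^ N ≤ M t / t ^ N := by gcongr
        linarith
      rw [Real.dist_eq, abs_sub_lt_iff]
      constructor <;> linarith
    have hfin := (ENNReal.continuous_ofReal.tendsto c).comp hmain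
    simpa [Function.comp_def, hcdef, ENNReal.ofReal_toReal hLne, hMdef] using hfin
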